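/- Let θ ∈ ℂ with |θ| = 1, θ ≠ 1, θ ≠ -1, and let u be the n×n matrix with u k l = (if k = l then 1 else 0) + (θ - 1)/n. If f : Fin n × Fin n → ℂ is symmetric (f (k,l) = f (l,k) for all k, l), vanishes on the diagonal (f (k,k) = 0 for all k), and has all row sums zero (Σ_l f (k,l) = 0 for all k), then D_u f = (-(conj θ)) • C_u f; that is, f is an eigenfunction of the Berezin transform I_u with eigenvalue -conj θ. -/

import Mathlib

open Finset Matrix

/-- The symbol-to-operator map `C_u`. -/
noncomputable def Cmap {ι : Type*} [Fintype ι] (u : Matrix ι ι ℂ) (f : ι × ι → ℂ) :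
    Matrix ι ι ℂ :=
  fun k k' => ∑ l, u k l * f (k, l) * (starRingEnd ℂ) (u k' l)

/-- The symbol-to-operator map `D_u`. -/
noncomputable def Dmap {ι : Type*} [Fintype ι] (u : Matrix ι ι ℂ) (f : ι × ι → ℂ) :
    Matrix ι ι ℂ :=
  fun k k' => ∑ l, u k l * f (k', l) * (starRingEnd ℂ) (u k' l)

lemma key_sum {n : ℕ} (c c' : ℂ) (g : Fin n → ℂ) (hg : ∑ l, g l = 0) (k k' : Fin n) :
    ∑ l, ((if k = l then 1 else 0) + c) * g l * ((if k' = l then 1 else 0) + c')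
      = (if k = k' then g k else 0) + c' * g k + c * g k' := by
  have h : ∀ l, ((if k = l then 1 else 0) + c) * g l * ((if k' = l then 1 else 0) + c')
      = (if k = l then (if k' = l then g l else 0) else 0)
        + ((if k = l then c' * g l else 0) + ((if k' = l then c * g l else 0)
        + c * c' * g l)) := by
    intro l
    by_cases h1 : k = l <;> by_cases h2 : k' = l <;> simp [h1, h2] <;> ring
  rw [Finset.sum_congr rfl fun l _ => h l]
  rw [Finset.sum_add_distrib, Finset.sum_add_distrib, Finset.sum_add_distrib,
    ← Finset.mul_sum, hg, mul_zero, add_zero]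
  simp only [Finset.sum_ite_eq, Finset.mem_univ, if_true]
  by_cases hkk : k = k'
  · subst hkk; simp only [if_pos rfl]; ring
  · rw [if_neg hkk, if_neg (fun h2 : k' = k => hkk h2.symm)]; ring

/-- for the unitary matrix `u k l = δ_{kl} + (θ - 1)/n` with `|θ| = 1`,
`θ ≠ ±1`, every symmetric function `f` vanishing on the diagonal and with zero row sums is
an eigenfunction of the Berezin transform `I_u` with eigenvalue `-conj θ`; the eigenvalue
equation is expressed as `D_u f = -conj θ • C_u f`. -/
theorem stmt16 (n : ℕ) (hn : 1 ≤ n) (θ : ℂ)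
    (hθ : ‖θ‖ = 1) (hθ1 : θ ≠ 1) (hθ2 : θ ≠ -1)
    (u : Matrix (Fin n) (Fin n) ℂ)
    (hu : ∀ k l, u k l = (if k = l then 1 else 0) + (θ - 1) / (n : ℂ))
    (f : Fin n × Fin n → ℂ)
    (hsymm : ∀ k l, f (k, l) = f (l, k))
    (hdiag : ∀ k, f (k, k) = 0)
    (hrow : ∀ k, ∑ l, f (k, l) = 0) :
    Dmap u f = (-(starRingEnd ℂ) θ) • Cmap u f := by
  have hn0 : (n : ℂ) ≠ 0 := Nat.cast_ne_zero.mpr (by omega)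
  have hconj : (starRingEnd ℂ) θ * θ = 1 := by
    rw [mul_comm, Complex.mul_conj]
    norm_cast
    rw [Complex.normSq_eq_norm_sq, hθ]; norm_num
  have h1 : (starRingEnd ℂ) θ - 1 = -(starRingEnd ℂ) θ * (θ - 1) := by
    linear_combination hconj
  have hc : ((starRingEnd ℂ) θ - 1) / (n : ℂ)
      = -(starRingEnd ℂ) θ * ((θ - 1) / (n : ℂ)) := by
    rw [h1]; ring
  funext k k'
  have hcu : ∀ k₀ l : Fin n,
      (starRingEnd ℂ) ((if k₀ = l then (1 : ℂ) else 0) + (θ - 1) / (n : ℂ))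
      = (if k₀ = l then 1 else 0) + ((starRingEnd ℂ) θ - 1) / (n : ℂ) := by
    intro k₀ l
    simp [apply_ite]
  have hD : Dmap u f k k'
      = (if k = k' then f (k', k) else 0)
        + ((starRingEnd ℂ) θ - 1) / (n : ℂ) * f (k', k)
        + (θ - 1) / (n : ℂ) * f (k', k') := by
    simp only [Dmap, hu, hcu]
    exact key_sum _ _ (fun l => f (k', l)) (hrow k') k k'
  have hC : Cmap u f k k'
      = (if k = k' then f (k, k) else 0)
        + ((starRingEnd ℂ) θ - 1) / (n : ℂ) * f (k, k)
        + (θ - 1) / (n : ℂ) * f (k, k') := by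
    simp only [Cmap, hu, hcu]
    exact key_sum _ _ (fun l => f (k, l)) (hrow k) k k'
  rw [Matrix.smul_apply, smul_eq_mul, hD, hC]
  simp only [hdiag, hsymm k' k, mul_zero, add_zero, zero_add]
  by_cases hkk : k = k'
  · subst hkk; simp [hdiag]
  · simp only [hkk, if_false, zero_add]
    rw [hc]; ring
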